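/- Let c ∈ ℝ^D be a diagonal curvature vector and let the data-side diagonal-curvature localized game on {1,…,N} be U_𝒟^(diag)(S) = η ∑_{n ∈ S} ⟨v, g_n⟩ − (η²/2) ∑_{d=1}^D c_d (∑_{m ∈ S} g_{m,d})². Then for every n ∈ {1,…,N}, the Shapley value of player n equals the row sum of the diagonal interaction matrix: φ_n(U_𝒟^(diag)) = ∑_{d=1}^D M^(diag)_{n,d} = η ⟨v, g_n⟩ − (η²/2) ∑_{d=1}^D c_d G_d g_{n,d}. -/

import Mathlib

/-- The Shapley value of player `i` in the cooperative game with utility `u` on the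
finite player set `P` with `|P| = m`:
`φ_i(u) = ∑_{S ⊆ P \ {i}} (|S|! (m - |S| - 1)! / m!) (u(S ∪ {i}) - u(S))`. -/
noncomputable def shapley {P : Type*} [Fintype P] [DecidableEq P]
    (u : Finset P → ℝ) (i : P) : ℝ :=
  ∑ S ∈ (Finset.univ.erase i).powerset,
    ((Nat.factorial S.card * Nat.factorial (Fintype.card P - S.card - 1) : ℝ)
        / (Nat.factorial (Fintype.card P) : ℝ))
      * (u (insert i S) - u S)

private lemma gauss_aux (n : ℕ) : ∑ j ∈ Finset.range n, ((j : ℝ) + 1) = n * (n + 1) / 2 := by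
  induction n with
  | zero => simp
  | succ k ih => rw [Finset.sum_range_succ, ih]; push_cast; ring

private lemma sumW_one {α : Type*} [DecidableEq α] (E : Finset α) (e : ℕ) (he : E.card = e) :
    ∑ S ∈ E.powerset,
      ((Nat.factorial S.card * Nat.factorial (e - S.card) : ℝ) / (Nat.factorial (e + 1))) = 1 := by
  rw [Finset.sum_powerset, he]
  have h : ∀ j ∈ Finset.range (e + 1),
      ∑ S ∈ Finset.powersetCard j E,
        ((Nat.factorial S.card * Nat.factorial (e - S.card) : ℝ) / (Nat.factorial (e + 1)))
        = (1 : ℝ) / (e + 1) := by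
    intro j hj
    rw [Finset.mem_range] at hj
    have hj' : j ≤ e := Nat.lt_succ_iff.mp hj
    rw [Finset.sum_congr rfl (fun S hS => by rw [(Finset.mem_powersetCard.mp hS).2]),
      Finset.sum_const, Finset.card_powersetCard, he, nsmul_eq_mul]
    have hk : ((e.choose j : ℝ) * j.factorial * (e - j).factorial) = e.factorial := by
      exact_mod_cast congrArg (Nat.cast (R := ℝ)) (Nat.choose_mul_factorial_mul_factorial hj')
    have hfs : ((e + 1).factorial : ℝ) = (e + 1) * e.factorial := by
      rw [Nat.factorial_succ]; push_cast; ring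
    have h1 : (e.factorial : ℝ) ≠ 0 := by positivity
    have h2 : ((e : ℝ) + 1) ≠ 0 := by positivity
    rw [hfs]
    field_simp
    linear_combination hk
  rw [Finset.sum_congr rfl h, Finset.sum_const, Finset.card_range, nsmul_eq_mul]
  have h2 : ((e : ℝ) + 1) ≠ 0 := by positivity
  push_cast
  field_simp
private lemma sumW_half {α : Type*} [DecidableEq α] (F : Finset α) (f : ℕ) (hf : F.card = f) :
    ∑ T ∈ F.powerset,
      ((Nat.factorial (T.card + 1) * Nat.factorial (f - T.card) : ℝ)
        / (Nat.factorial (f + 2))) = 1 / 2 := by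
  rw [Finset.sum_powerset, hf]
  have h : ∀ j ∈ Finset.range (f + 1),
      ∑ S ∈ Finset.powersetCard j F,
        ((Nat.factorial (S.card + 1) * Nat.factorial (f - S.card) : ℝ) / (Nat.factorial (f + 2)))
        = ((j : ℝ) + 1) / ((f + 1) * (f + 2)) := by
    intro j hj
    rw [Finset.mem_range] at hj
    have hj' : j ≤ f := Nat.lt_succ_iff.mp hj
    rw [Finset.sum_congr rfl (fun S hS => by rw [(Finset.mem_powersetCard.mp hS).2]),
      Finset.sum_const, Finset.card_powersetCard, hf, nsmul_eq_mul]
    have hk : ((f.choose j : ℝ) * j.factorial * (f - j).factorial) = f.factorial := by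
      exact_mod_cast congrArg (Nat.cast (R := ℝ)) (Nat.choose_mul_factorial_mul_factorial hj')
    have hfs : ((f + 2).factorial : ℝ) = (f + 2) * ((f + 1) * f.factorial) := by
      show ((f + 1 + 1).factorial : ℝ) = _
      rw [Nat.factorial_succ, Nat.factorial_succ]; push_cast; ring
    have hjs : ((j + 1).factorial : ℝ) = (j + 1) * j.factorial := by
      rw [Nat.factorial_succ]; push_cast; ring
    have h1 : (f.factorial : ℝ) ≠ 0 := by positivity
    have h2 : ((f : ℝ) + 1) ≠ 0 := by positivity
    have h3 : ((f : ℝ) + 2) ≠ 0 := by positivity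
    rw [hfs, hjs]
    field_simp
    linear_combination hk
  rw [Finset.sum_congr rfl h, ← Finset.sum_div, gauss_aux]
  have h2 : ((f : ℝ) + 1) ≠ 0 := by positivity
  have h3 : ((f : ℝ) + 2) ≠ 0 := by positivity
  push_cast
  field_simp
  ring

theorem shapley_data_diag
    (N D : ℕ) (hN : 1 ≤ N) (hD : 1 ≤ D) (η : ℝ) (hη : 0 < η)
    (g : Fin N → Fin D → ℝ) (v : Fin D → ℝ) (c : Fin D → ℝ)
    (G : Fin D → ℝ) (hG : ∀ d, G d = ∑ n, g n d)
    (M : Fin N → Fin D → ℝ)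
    (hM : ∀ n d, M n d = η * v d * g n d - η ^ 2 / 2 * c d * G d * g n d)
    (UD : Finset (Fin N) → ℝ)
    (hU : ∀ S, UD S = η * ∑ n ∈ S, ∑ d, v d * g n d
        - η ^ 2 / 2 * ∑ d, c d * (∑ m ∈ S, g m d) ^ 2)
    (n : Fin N) :
    shapley UD n = ∑ d, M n d ∧
      shapley UD n = η * ∑ d, v d * g n d - η ^ 2 / 2 * ∑ d, c d * G d * g n d := by
  set E : Finset (Fin N) := Finset.univ.erase n with hE
  have hnE : n ∉ E := Finset.notMem_erase n _
  have hEcard : E.card = N - 1 := by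
    rw [hE, Finset.card_erase_of_mem (Finset.mem_univ n), Finset.card_univ, Fintype.card_fin]
  obtain ⟨e, rfl⟩ : ∃ e, N = e + 1 := ⟨N - 1, by omega⟩
  have he : E.card = e := by omega
  set A : ℝ := η * ∑ d, v d * g n d - η ^ 2 / 2 * ∑ d, c d * (g n d) ^ 2 with hA
  set B : Fin (e+1) → ℝ := fun m => -(η ^ 2) * ∑ d, c d * g m d * g n d with hB
  have hBsum : ∀ S : Finset (Fin (e+1)),
      ∑ m ∈ S, B m = -(η ^ 2) * ∑ d, c d * (∑ m ∈ S, g m d) * g n d := by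
    intro S
    rw [hB, ← Finset.mul_sum, Finset.sum_comm]
    congr 1
    refine Finset.sum_congr rfl fun d _ => ?_
    rw [Finset.mul_sum, Finset.sum_mul]
  have key : ∀ S ∈ E.powerset, UD (insert n S) - UD S = A + ∑ m ∈ S, B m := by
    intro S hS
    have hnS : n ∉ S := fun h => hnE (Finset.mem_powerset.mp hS h)
    have hq : ∀ d, (∑ m ∈ insert n S, g m d) = g n d + ∑ m ∈ S, g m d :=
      fun d => Finset.sum_insert hnS
    rw [hU, hU, Finset.sum_insert hnS, hBsum]
    simp only [hq]
    have expand : ∑ d, c d * (g n d + ∑ m ∈ S, g m d) ^ 2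
        = ∑ d, c d * (g n d) ^ 2 + ∑ d, c d * (∑ m ∈ S, g m d) ^ 2
          + 2 * ∑ d, c d * (∑ m ∈ S, g m d) * g n d := by
      rw [Finset.mul_sum, ← Finset.sum_add_distrib, ← Finset.sum_add_distrib]
      exact Finset.sum_congr rfl fun d _ => by ring
    rw [expand, hA]
    ring
  have hsub : ∀ k : ℕ, e + 1 - k - 1 = e - k := fun k => by omega
  have hcardP : Fintype.card (Fin (e + 1)) = e + 1 := Fintype.card_fin _
  set W : ℕ → ℝ := fun k => ((Nat.factorial k * Nat.factorial (e - k) : ℝ)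
    / (Nat.factorial (e + 1))) with hW
  have inner : ∀ m ∈ E, ∑ S ∈ E.powerset, (if m ∈ S then W S.card * B m else 0)
      = (1 / 2) * B m := by
    intro m hm
    have he1 : 1 ≤ e := by
      have : 0 < E.card := Finset.card_pos.mpr ⟨m, hm⟩
      omega
    have hm' : m ∉ E.erase m := Finset.notMem_erase m E
    rw [← Finset.insert_erase hm, Finset.sum_powerset_insert hm']
    have h1 : ∑ T ∈ (E.erase m).powerset, (if m ∈ T then W T.card * B m else 0) = 0 := by
      refine Finset.sum_eq_zero fun T hT => ?_
      have : m ∉ T := fun h => Finset.notMem_erase m E (Finset.mem_powerset.mp hT h)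
      simp [this]
    have h2 : ∀ T ∈ (E.erase m).powerset,
        (if m ∈ insert m T then W (insert m T).card * B m else 0) = W (T.card + 1) * B m := by
      intro T hT
      have hmT : m ∉ T := fun h => Finset.notMem_erase m E (Finset.mem_powerset.mp hT h)
      rw [if_pos (Finset.mem_insert_self m T), Finset.card_insert_of_notMem hmT]
    rw [h1, zero_add, Finset.sum_congr rfl h2, ← Finset.sum_mul]
    have hf : (E.erase m).card = e - 1 := by rw [Finset.card_erase_of_mem hm, he]
    have hhalf := sumW_half (E.erase m) (e - 1) hf
    rw [show e - 1 + 2 = e + 1 from by omega] at hhalf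
    have hsub2 : ∀ k : ℕ, e - 1 - k = e - (k + 1) := fun k => by omega
    simp only [hsub2] at hhalf
    simp only [hW]
    rw [hhalf]
  have main : shapley UD n = A + (1 / 2) * ∑ m ∈ E, B m := by
    rw [shapley]
    simp only [Fintype.card_fin, ← hE]
    calc ∑ S ∈ E.powerset,
          ((Nat.factorial S.card * Nat.factorial (e + 1 - S.card - 1) : ℝ)
            / (Nat.factorial (e + 1))) * (UD (insert n S) - UD S)
        = ∑ S ∈ E.powerset, W S.card * (A + ∑ m ∈ S, B m) := by
          refine Finset.sum_congr rfl fun S hS => ?_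
          rw [hsub, key S hS, hW]
      _ = (∑ S ∈ E.powerset, W S.card) * A
          + ∑ S ∈ E.powerset, ∑ m ∈ S, W S.card * B m := by
          simp only [mul_add, Finset.sum_add_distrib, Finset.mul_sum, Finset.sum_mul]
      _ = 1 * A + ∑ S ∈ E.powerset, ∑ m ∈ E, (if m ∈ S then W S.card * B m else 0) := by
          rw [hW, sumW_one E e he]
          congr 1
          refine Finset.sum_congr rfl fun S hS => ?_
          rw [Finset.sum_ite_mem, Finset.inter_eq_right.mpr (Finset.mem_powerset.mp hS)]
      _ = A + ∑ m ∈ E, ∑ S ∈ E.powerset, (if m ∈ S then W S.card * B m else 0) := by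
          rw [one_mul, Finset.sum_comm]
      _ = A + ∑ m ∈ E, (1 / 2) * B m := by rw [Finset.sum_congr rfl inner]
      _ = A + (1 / 2) * ∑ m ∈ E, B m := by rw [Finset.mul_sum]
  have hG' : ∀ d, G d = g n d + ∑ m ∈ E, g m d := fun d => by
    rw [hG d, hE, ← Finset.add_sum_erase _ _ (Finset.mem_univ n)]
  have hGsum : ∑ d, c d * G d * g n d
      = ∑ d, c d * (g n d) ^ 2 + ∑ d, c d * (∑ m ∈ E, g m d) * g n d := by
    rw [← Finset.sum_add_distrib]
    exact Finset.sum_congr rfl fun d _ => by rw [hG' d]; ring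
  have main2 : shapley UD n = η * ∑ d, v d * g n d - η ^ 2 / 2 * ∑ d, c d * G d * g n d := by
    rw [main, hBsum E, hGsum, hA]
    ring
  refine ⟨?_, main2⟩
  rw [main2]
  refine Eq.symm ?_
  calc ∑ d, M n d = ∑ d, (η * (v d * g n d) - η ^ 2 / 2 * (c d * G d * g n d)) :=
        Finset.sum_congr rfl fun d _ => by rw [hM]; ring
    _ = η * ∑ d, v d * g n d - η ^ 2 / 2 * ∑ d, c d * G d * g n d := by
        rw [Finset.sum_sub_distrib, Finset.mul_sum, Finset.mul_sum]
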